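/- arXiv:2105.04164 — 2 statements merged into one kernel-verified Lean document; each statement's English description precedes it below -/
import Mathlib

section
/- If a directed graph has a node j with at least two out-neighbors i, i' that each have in-degree 1 (only the edge from j), then the system with adjacency matrix A (where A(i,j) ≠ 0 iff edge j→i) cannot be controllable with an input matrix B whose nonzero rows avoid both i and i', regardless of the free weight values: the rows i and i' of the Kalman matrix are proportional. -/
/-- If nodes `i ≠ i'` each have a unique in-edge, both coming
from node `j` (so `A i j ≠ 0`, `A i' j ≠ 0` and all other entries of rows
`i`, `i'` vanish), and the input matrix `B` has rows `i` and `i'`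
identically zero, then row `i` of the Kalman matrix
`Q = [B, AB, ..., A^{N-1}B]` equals `(A i j / A i' j)` times row `i'`,
so `rank Q < N` and the system cannot be controllable, regardless of the
free weight values. -/
theorem two_out_neighbors_unique_in_edge_not_controllable
    (N M : ℕ) (A : Matrix (Fin N) (Fin N) ℝ) (B : Matrix (Fin N) (Fin M) ℝ)
    (i i' j : Fin N) (hne : i ≠ i')
    (hij : A i j ≠ 0) (hi'j : A i' j ≠ 0)
    (hrow_i : ∀ l, l ≠ j → A i l = 0)
    (hrow_i' : ∀ l, l ≠ j → A i' l = 0)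
    (hBi : ∀ p, B i p = 0) (hBi' : ∀ p, B i' p = 0)
    (Q : Matrix (Fin N) (Fin N × Fin M) ℝ)
    (hQ : Q = fun a p => (A ^ (p.1 : ℕ) * B) a p.2) :
    (∀ p, Q i p = (A i j / A i' j) * Q i' p) ∧ Q.rank < N := by
  set c : ℝ := A i j / A i' j with hc
  -- row computations for powers
  have hpow : ∀ (k : ℕ) (q : Fin M),
      (A ^ k * B) i q = c * (A ^ k * B) i' q := by
    intro k q
    cases k with
    | zero => simp [hBi, hBi']
    | succ k =>
      have hi : (A ^ (k + 1) * B) i q = A i j * (A ^ k * B) j q := by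
        rw [pow_succ', Matrix.mul_assoc, Matrix.mul_apply]
        exact Finset.sum_eq_single j (fun l _ hl => by rw [hrow_i l hl, zero_mul])
          (fun h => absurd (Finset.mem_univ j) h)
      have hi' : (A ^ (k + 1) * B) i' q = A i' j * (A ^ k * B) j q := by
        rw [pow_succ', Matrix.mul_assoc, Matrix.mul_apply]
        exact Finset.sum_eq_single j (fun l _ hl => by rw [hrow_i' l hl, zero_mul])
          (fun h => absurd (Finset.mem_univ j) h)
      rw [hi, hi', hc]
      field_simp
  have hmain : ∀ p, Q i p = c * Q i' p := by
    intro p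
    rw [hQ]
    exact hpow p.1 p.2
  refine ⟨hmain, ?_⟩
  -- the vector witnessing row dependence
  set v : Fin N → ℝ := Pi.single i 1 - Pi.single i' c with hv
  have hvker : Matrix.vecMul v Q = 0 := by
    funext p
    simp only [Matrix.vecMul, dotProduct, hv, Pi.sub_apply, sub_mul,
      Finset.sum_sub_distrib, Pi.zero_apply]
    rw [Finset.sum_eq_single i (fun a _ ha => by
        rw [Pi.single_eq_of_ne ha, zero_mul])
      (fun h => absurd (Finset.mem_univ i) h),
      Finset.sum_eq_single i' (fun a _ ha => by
        rw [Pi.single_eq_of_ne ha, zero_mul])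
      (fun h => absurd (Finset.mem_univ i') h)]
    simp [hmain p]
  have hvne : v ≠ 0 := by
    intro h
    have : v i = 0 := by rw [h]; rfl
    rw [hv] at this
    simp [Pi.single_eq_of_ne hne, Pi.single_eq_same] at this
  -- rank via transpose
  rw [← Matrix.rank_transpose]
  have hker : v ∈ LinearMap.ker Q.transpose.mulVecLin := by
    simp [Matrix.mulVecLin_apply, Matrix.mulVec_transpose, hvker]
  have hkerne : LinearMap.ker Q.transpose.mulVecLin ≠ ⊥ := by
    intro h
    exact hvne ((Submodule.mem_bot ℝ).mp (h ▸ hker))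
  have hkerpos : 0 < Module.finrank ℝ (LinearMap.ker Q.transpose.mulVecLin) := by
    rcases Nat.eq_zero_or_pos (Module.finrank ℝ (LinearMap.ker Q.transpose.mulVecLin)) with h | h
    · exact absurd (Submodule.finrank_eq_zero.mp h) hkerne
    · exact h
  have hsum := LinearMap.finrank_range_add_finrank_ker Q.transpose.mulVecLin
  rw [Module.finrank_pi ℝ, Fintype.card_fin] at hsum
  have : Q.transpose.rank = Module.finrank ℝ (LinearMap.range Q.transpose.mulVecLin) := rfl
  omega
end

section
/- If two rows i and i' of the Kalman matrix Q = [B, AB, ..., A^{N-1}B] are linearly dependent (one a scalar multiple of the other), then for any solution with x(0) = 0 the states x_i(t) and x_{i'}(t) satisfy the same linear dependence for all t. -/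
/-- If rows `i` and `i'` of the Kalman matrix are linearly
dependent — there is `c : ℝ` with `row_i (A^k B) = c · row_{i'} (A^k B)` for
all `0 ≤ k ≤ N−1` — then for any solution of `dx/dt = Ax + Bu` with
`x(0) = 0`, the states satisfy the same dependence: `x_i(t) = c · x_{i'}(t)`
for all `t`. -/
theorem dependent_kalman_rows_give_dependent_states
    (N M : ℕ) (A : Matrix (Fin N) (Fin N) ℝ) (B : Matrix (Fin N) (Fin M) ℝ)
    (i i' : Fin N) (c : ℝ)
    (hrows : ∀ k : ℕ, k < N → ∀ p : Fin M, (A ^ k * B) i p = c * (A ^ k * B) i' p)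
    (u : ℝ → Fin M → ℝ) (hu : Continuous u)
    (x : ℝ → Fin N → ℝ)
    (hx : ∀ t : ℝ, HasDerivAt x (A.mulVec (x t) + B.mulVec (u t)) t)
    (hx0 : x 0 = 0) :
    ∀ t : ℝ, x t i = c * x t i' := by
  rcases Nat.eq_zero_or_pos N with hN | hN
  · intro t; exact absurd i.isLt (by omega)
  -- abbreviation for the (negated) characteristic polynomial coefficients
  set d : ℕ → ℝ := fun j => -(A.charpoly.coeff j) with hd
  -- Cayley–Hamilton: A^N is a combination of lower powers
  have hdeg : A.charpoly.natDegree = N := by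
    simp [Matrix.charpoly_natDegree_eq_dim]
  have hAN : A ^ N = ∑ j ∈ Finset.range N, d j • A ^ j := by
    have h := Matrix.aeval_self_charpoly A
    rw [Polynomial.aeval_eq_sum_range, hdeg, Finset.sum_range_succ] at h
    have hc : A.charpoly.coeff N = 1 := by
      have := A.charpoly_monic.coeff_natDegree; rwa [hdeg] at this
    rw [hc, one_smul] at h
    have h2 := eq_neg_of_add_eq_zero_right h
    rw [h2, ← Finset.sum_neg_distrib]
    exact Finset.sum_congr rfl (by intro j _; rw [hd, neg_smul])
  -- The row relation holds for all powers
  have hall : ∀ k : ℕ, ∀ p : Fin M, (A ^ k * B) i p = c * (A ^ k * B) i' p := by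
    intro k
    induction k using Nat.strong_induction_on with
    | _ k ih =>
      by_cases hk : k < N
      · exact hrows k hk
      · push_neg at hk
        intro p
        have hsplit : A ^ k = ∑ j ∈ Finset.range N, d j • A ^ (k - N + j) := by
          have : A ^ k = A ^ (k - N) * A ^ N := by
            rw [← pow_add]; congr 1; omega
          rw [this, hAN, Finset.mul_sum]
          exact Finset.sum_congr rfl (by
            intro j _
            rw [Matrix.mul_smul, ← pow_add])
        have hexp : ∀ q : Fin N,
            (A ^ k * B) q p = ∑ j ∈ Finset.range N, d j * (A ^ (k - N + j) * B) q p := by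
          intro q
          rw [hsplit]
          simp only [Matrix.sum_mul, Matrix.sum_apply, Matrix.smul_mul,
            Matrix.smul_apply, smul_eq_mul]
        rw [hexp i, hexp i', Finset.mul_sum]
        refine Finset.sum_congr rfl ?_
        intro j hj
        have hjlt : j < N := Finset.mem_range.mp hj
        have : (A ^ (k - N + j) * B) i p = c * (A ^ (k - N + j) * B) i' p :=
          ih (k - N + j) (by omega) p
        rw [this]; ring
  -- per-component derivative of x
  have hxc : ∀ t : ℝ, ∀ j : Fin N,
      HasDerivAt (fun s => x s j) ((A.mulVec (x t) + B.mulVec (u t)) j) t :=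
    fun t => hasDerivAt_pi.mp (hx t)
  -- the scalar functions y k
  set y : ℕ → ℝ → ℝ :=
    fun k t => ((A ^ k).mulVec (x t)) i - c * ((A ^ k).mulVec (x t)) i' with hy
  -- derivative of a row of M ⬝ x
  have hrowderiv : ∀ (Mt : Matrix (Fin N) (Fin N) ℝ) (j : Fin N) (t : ℝ),
      HasDerivAt (fun s => Mt.mulVec (x s) j)
        (Mt.mulVec (A.mulVec (x t) + B.mulVec (u t)) j) t := by
    intro Mt j t
    have h1 : ∀ s : ℝ, Mt.mulVec (x s) j = ∑ l : Fin N, Mt j l * x s l := by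
      intro s; rfl
    have h2 : Mt.mulVec (A.mulVec (x t) + B.mulVec (u t)) j
        = ∑ l : Fin N, Mt j l * (A.mulVec (x t) + B.mulVec (u t)) l := rfl
    rw [h2]
    refine HasDerivAt.congr_deriv (f := fun s => ∑ l : Fin N, Mt j l * x s l) ?_ rfl |>.congr_of_eventuallyEq
      (Filter.Eventually.of_forall fun s => (h1 s))
    exact HasDerivAt.fun_sum fun l _ => (hxc t l).const_mul (Mt j l)
  -- derivative of y k is y (k+1)
  have hy' : ∀ (k : ℕ) (t : ℝ), HasDerivAt (y k) (y (k + 1) t) t := by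
    intro k t
    have h1 := (hrowderiv (A ^ k) i t).sub ((hrowderiv (A ^ k) i' t).const_mul c)
    have key : (A ^ k).mulVec (A.mulVec (x t) + B.mulVec (u t)) i
        - c * (A ^ k).mulVec (A.mulVec (x t) + B.mulVec (u t)) i' = y (k + 1) t := by
      have hB : ((A ^ k * B).mulVec (u t)) i = c * ((A ^ k * B).mulVec (u t)) i' := by
        show (∑ p, (A ^ k * B) i p * u t p) = c * ∑ p, (A ^ k * B) i' p * u t p
        rw [Finset.mul_sum]
        exact Finset.sum_congr rfl fun p _ => by rw [hall k p]; ring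
      simp only [Matrix.mulVec_add, Matrix.mulVec_mulVec, ← pow_succ, Pi.add_apply, hy]
      rw [hB]; ring
    rw [← key]
    exact h1
  -- Cayley–Hamilton for y
  have hyN : ∀ t : ℝ, y N t = ∑ j ∈ Finset.range N, d j * y j t := by
    intro t
    have hent : ∀ q : Fin N, ((A ^ N).mulVec (x t)) q
        = ∑ j ∈ Finset.range N, d j * ((A ^ j).mulVec (x t)) q := by
      intro q
      rw [hAN]
      have hsum : ((∑ j ∈ Finset.range N, d j • A ^ j).mulVec (x t)) q
          = ∑ j ∈ Finset.range N, ((d j • A ^ j).mulVec (x t)) q := by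
        simp only [Matrix.mulVec, dotProduct, Matrix.sum_apply, Finset.sum_mul]
        exact Finset.sum_comm
      rw [hsum]
      exact Finset.sum_congr rfl fun j _ => by
        rw [Matrix.smul_mulVec, Pi.smul_apply, smul_eq_mul]
    simp only [hy, hent, Finset.mul_sum]
    rw [← Finset.sum_sub_distrib]
    exact Finset.sum_congr rfl fun j _ => by ring
  -- the companion-type matrix
  set C : Matrix (Fin N) (Fin N) ℝ :=
    fun k l => if (k : ℕ) + 1 < N then (if (l : ℕ) = (k : ℕ) + 1 then 1 else 0)
      else d (l : ℕ) with hC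
  set w : ℝ → Fin N → ℝ := fun t k => y (k : ℕ) t with hw
  -- w satisfies the linear ODE z' = C z
  have hw' : ∀ t : ℝ, HasDerivAt w (C.mulVec (w t)) t := by
    intro t
    rw [hasDerivAt_pi]
    intro k
    have hCk : C.mulVec (w t) k = y ((k : ℕ) + 1) t := by
      show (∑ l : Fin N, C k l * y (l : ℕ) t) = y ((k : ℕ) + 1) t
      by_cases hk1 : (k : ℕ) + 1 < N
      · have : ∀ l : Fin N, C k l * y (l : ℕ) t
            = if l = (⟨(k : ℕ) + 1, hk1⟩ : Fin N) then y ((k : ℕ) + 1) t else 0 := by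
          intro l
          simp only [hC, if_pos hk1]
          by_cases hl : l = (⟨(k : ℕ) + 1, hk1⟩ : Fin N)
          · subst hl; simp
          · have : ¬ ((l : ℕ) = (k : ℕ) + 1) := fun h => hl (Fin.ext h)
            simp [this, hl]
        rw [Finset.sum_congr rfl fun l _ => this l, Finset.sum_ite_eq' Finset.univ]
        simp
      · have hkN : (k : ℕ) + 1 = N := by have := k.isLt; omega
        have : ∀ l : Fin N, C k l * y (l : ℕ) t = d (l : ℕ) * y (l : ℕ) t := by
          intro l; simp [hC, hk1]
        rw [Finset.sum_congr rfl fun l _ => this l, hkN]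
        rw [hyN t, Finset.sum_range fun j => d j * y j t]
    rw [hCk]
    exact hy' (k : ℕ) t
  -- initial condition
  have hw0 : w 0 = 0 := by
    funext k
    simp [hw, hy, hx0, Matrix.mulVec_zero]
  -- Lipschitz bound for z ↦ C z
  set L : (Fin N → ℝ) →L[ℝ] (Fin N → ℝ) :=
    LinearMap.toContinuousLinearMap C.mulVecLin with hL
  have hlip : ∀ t : ℝ, LipschitzOnWith ‖L‖₊
      (fun z : Fin N → ℝ => C.mulVec z) (Set.univ) := by
    intro t
    have : (fun z : Fin N → ℝ => C.mulVec z) = fun z => L z := by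
      funext z; simp [hL]
    rw [this]
    exact (L.lipschitz).lipschitzOnWith
  -- uniqueness of solutions: w ≡ 0
  have hwzero : ∀ t : ℝ, w t = 0 := by
    intro t
    have habs : |t| < |t| + 1 := by linarith [abs_nonneg t]
    have ht0 : (0 : ℝ) ∈ Set.Ioo (-(|t| + 1)) (|t| + 1) := by
      constructor <;> [linarith [abs_nonneg t]; linarith [abs_nonneg t]]
    have hEq := ODE_solution_unique_of_mem_Icc
      (v := fun _ z => C.mulVec z) (s := fun _ => Set.univ) (K := ‖L‖₊)
      (fun t _ => hlip t) ht0
      (f := w) (g := fun _ => 0)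
      (fun s _ => (hw' s).continuousAt.continuousWithinAt)
      (fun s _ => hw' s)
      (fun s _ => Set.mem_univ _)
      continuousOn_const
      (fun s _ => by
        simpa [Matrix.mulVec_zero] using (hasDerivAt_const s (0 : Fin N → ℝ)))
      (fun s _ => Set.mem_univ _)
      hw0
    have ht : t ∈ Set.Icc (-(|t| + 1)) (|t| + 1) := by
      constructor
      · linarith [neg_abs_le t]
      · linarith [le_abs_self t]
    exact hEq ht
  -- conclude
  intro t
  have h0 := congrFun (hwzero t) ⟨0, hN⟩
  simp only [hw, hy, Pi.zero_apply] at h0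
  rw [pow_zero, Matrix.one_mulVec] at h0
  linarith [h0]
end
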